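/- For the ultra-discrete KdV map with J < K, if m is a probability measure supported on [J/2, ∞) and X ~ m, Y ~ m + (K−J) are independent (where m + L denotes m shifted by L), then F^{(J,K)}(X,Y) has the same joint distribution as (X,Y). -/

import Mathlib

open MeasureTheory

theorem udKdV_shifted_detailed_balance (J K : ℝ) (hJK : J < K)
    (m : Measure ℝ) [IsProbabilityMeasure m]
    (hsupp : m (Set.Ici (J / 2)) = 1)
    (F : ℝ × ℝ → ℝ × ℝ)
    (hF : ∀ x u : ℝ, F (x, u) =
      (u - max (x + u - J) 0 + max (x + u - K) 0,
       x - max (x + u - K) 0 + max (x + u - J) 0)) :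
    Measure.map F (m.prod (Measure.map (fun x => x + (K - J)) m)) =
      m.prod (Measure.map (fun x => x + (K - J)) m) := by
  set L := K - J with hL
  set ν : Measure ℝ := Measure.map (fun x => x + L) m with hν
  have hmeas_shift : Measurable (fun x : ℝ => x + L) := measurable_add_const L
  have hmeas_unshift : Measurable (fun x : ℝ => x - L) := measurable_sub_const L
  have hνprob : IsProbabilityMeasure ν := Measure.isProbabilityMeasure_map hmeas_shift.aemeasurable
  have hFdef : F = fun p : ℝ × ℝ =>
      (p.2 - max (p.1 + p.2 - J) 0 + max (p.1 + p.2 - K) 0,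
       p.1 - max (p.1 + p.2 - K) 0 + max (p.1 + p.2 - J) 0) := by
    funext p; obtain ⟨x, u⟩ := p; exact hF x u
  have hFmeas : Measurable F := by
    rw [hFdef]; fun_prop
  set G : ℝ × ℝ → ℝ × ℝ := fun p => (p.2 - L, p.1 + L) with hG
  have hGmeas : Measurable G := by rw [hG]; fun_prop
  -- a.e. membership in supports
  have hνsupp : ν (Set.Ici (J / 2 + L)) = 1 := by
    rw [hν, Measure.map_apply hmeas_shift measurableSet_Ici]
    have : (fun x : ℝ => x + L) ⁻¹' Set.Ici (J / 2 + L) = Set.Ici (J / 2) := by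
      ext x; simp [Set.mem_preimage, Set.mem_Ici]
    rw [this, hsupp]
  have hae_m : ∀ᵐ x ∂m, x ∈ Set.Ici (J / 2) :=
    (mem_ae_iff_prob_eq_one measurableSet_Ici).2 hsupp
  have hae_ν : ∀ᵐ u ∂ν, u ∈ Set.Ici (J / 2 + L) :=
    (mem_ae_iff_prob_eq_one measurableSet_Ici).2 hνsupp
  have hae_S : ∀ᵐ z ∂(m.prod ν), z ∈ Set.Ici (J / 2) ×ˢ Set.Ici (J / 2 + L) := by
    rw [Measure.ae_prod_mem_iff_ae_ae_mem (measurableSet_Ici.prod measurableSet_Ici)]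
    filter_upwards [hae_m] with x hx
    filter_upwards [hae_ν] with u hu
    exact ⟨hx, hu⟩
  have hae : F =ᵐ[m.prod ν] G := by
    filter_upwards [hae_S] with z hz
    obtain ⟨x, u⟩ := z
    obtain ⟨hx, hu⟩ := hz
    have hxu : K ≤ x + u := by
      have : J / 2 + (J / 2 + L) ≤ x + u := add_le_add hx hu
      linarith
    have h1 : max (x + u - J) 0 = x + u - J := max_eq_left (by linarith)
    have h2 : max (x + u - K) 0 = x + u - K := max_eq_left (by linarith)
    rw [hF x u, h1, h2]
    simp only [hG, Prod.mk.injEq]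
    constructor <;> ring
  rw [Measure.map_congr hae]
  -- compute the pushforward under G
  have hGcomp : G = (Prod.map (fun u : ℝ => u - L) (fun x : ℝ => x + L)) ∘ Prod.swap := by
    funext p; rfl
  rw [hGcomp, ← Measure.map_map (hmeas_unshift.prodMap hmeas_shift) measurable_swap,
    Measure.prod_swap, ← Measure.map_prod_map _ _ hmeas_unshift hmeas_shift]
  have h1 : Measure.map (fun u : ℝ => u - L) ν = m := by
    rw [hν, Measure.map_map hmeas_unshift hmeas_shift]
    have : ((fun u : ℝ => u - L) ∘ fun x : ℝ => x + L) = id := by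
      funext x; simp
    rw [this, Measure.map_id]
  rw [h1]
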